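/- For every z > 0 and every n ∈ ℕ, the n-th moment of the generalized inverse Gaussian distribution with parameters (1, z², -1/2) satisfies ∫_0^∞ xⁿ g₋(x; z) dx = f_n(z). -/

import Mathlib

/-- The generalized inverse Gaussian density with parameters `(ψ, χ, λ) = (1, z², -1/2)`:
`g₋(x; z) = (z e^z / √(2π)) x^{-3/2} exp(-z²/(2x) - x/2)`. -/
noncomputable def gigMinus (z x : ℝ) : ℝ :=
  z * Real.exp z / Real.sqrt (2 * Real.pi) * x ^ (-(3 : ℝ) / 2) *
    Real.exp (-z ^ 2 / (2 * x) - x / 2)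

/-- The Bessel polynomial `q_n(z) = ∑_{l=0}^n [C(n,l)/C(2n,l)] (2z)^l / l!`. -/
noncomputable def besselQ (n : ℕ) (z : ℝ) : ℝ :=
  ∑ l ∈ Finset.range (n + 1),
    ((n.choose l : ℝ) / ((2 * n).choose l : ℝ)) * (2 * z) ^ l / (Nat.factorial l : ℝ)

/-- The reverse Bessel polynomial `θ_n(z) = ((2n)!/n!) 2^{-n} q_n(z)`. -/
noncomputable def besselTheta (n : ℕ) (z : ℝ) : ℝ :=
  ((Nat.factorial (2 * n) : ℝ) / (Nat.factorial n : ℝ)) * ((2 : ℝ) ^ n)⁻¹ * besselQ n z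

/-- The Carlitz Bessel polynomials: `f₀(z) = 1` and `f_n(z) = z θ_{n-1}(z)` for `n ≥ 1`. -/
noncomputable def besselF (n : ℕ) (z : ℝ) : ℝ :=
  if n = 0 then 1 else z * besselTheta (n - 1) z

open Real MeasureTheory Set Filter Topology


noncomputable def hfun (z α x : ℝ) : ℝ := x ^ α * Real.exp (-z ^ 2 / (2 * x) - x / 2)

lemma bounded_of_tendsto {f : ℝ → ℝ} (a : ℝ) (hc : ContinuousOn f (Ici a))
    (h : Tendsto f atTop (𝓝 0)) : ∃ M, ∀ x ∈ Ici a, |f x| ≤ M := by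
  have h1 : ∀ᶠ y in atTop, |f y| ≤ 1 := by
    have := h.eventually (eventually_le_nhds (show (0:ℝ) < 1 by norm_num)) -- |f y| ≤ ?
    filter_upwards [h.eventually (Metric.ball_mem_nhds (0:ℝ) one_pos)] with y hy
    simpa [Real.dist_eq] using hy.le
  obtain ⟨R, hR⟩ := h1.exists_forall_of_atTop
  obtain ⟨C, hC⟩ := (isCompact_Icc (a := a) (b := max a R)).exists_bound_of_continuousOn
    (hc.mono (Icc_subset_Ici_self))
  refine ⟨max C 1, fun x hx => ?_⟩
  rcases le_total x (max a R) with h' | h'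
  · exact le_trans (by simpa using hC x ⟨hx, h'⟩) (le_max_left _ _)
  · exact le_trans (hR x (le_trans (le_max_right a R) h')) (le_max_right _ _)

lemma tendsto_hfun_atTop (z α : ℝ) : Tendsto (hfun z α) atTop (𝓝 0) := by
  have h1 : Tendsto (fun x : ℝ => x ^ α * Real.exp (-(1/2) * x)) atTop (𝓝 0) :=
    tendsto_rpow_mul_exp_neg_mul_atTop_nhds_zero α (1/2) (by norm_num)
  have h2 : Tendsto (fun x : ℝ => Real.exp (-z ^ 2 / (2 * x))) atTop (𝓝 1) := by
    have : Tendsto (fun x : ℝ => -z ^ 2 / (2 * x)) atTop (𝓝 0) := by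
      apply Tendsto.div_atTop tendsto_const_nhds
      exact Tendsto.const_mul_atTop (by norm_num) tendsto_id
    simpa [Function.comp_def] using (Real.continuous_exp.tendsto 0).comp this
  have := h1.mul h2
  rw [zero_mul] at this
  apply this.congr' ?_
  filter_upwards [eventually_gt_atTop (0:ℝ)] with x hx
  rw [hfun, mul_assoc, ← Real.exp_add]
  ring_nf

lemma tendsto_hfun_zero (z α : ℝ) (hz : 0 < z) :
    Tendsto (hfun z α) (𝓝[>] (0:ℝ)) (𝓝 0) := by
  have h1 : Tendsto (fun y : ℝ => y ^ (-α) * Real.exp (-(z ^ 2 / 2) * y)) atTop (𝓝 0) :=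
    tendsto_rpow_mul_exp_neg_mul_atTop_nhds_zero (-α) (z ^ 2 / 2) (by positivity)
  have h2 : Tendsto (fun x : ℝ => (x⁻¹) ^ (-α) * Real.exp (-(z ^ 2 / 2) * x⁻¹))
      (𝓝[>] (0:ℝ)) (𝓝 0) := h1.comp tendsto_inv_nhdsGT_zero
  have h3 : Tendsto (fun x : ℝ => Real.exp (-x / 2)) (𝓝[>] (0:ℝ)) (𝓝 1) := by
    have : Tendsto (fun x : ℝ => Real.exp (-x / 2)) (𝓝 (0:ℝ)) (𝓝 1) := by
      have h0 := (((continuous_neg (G := ℝ)).div_const 2)).tendsto 0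
      norm_num at h0
      simpa [Function.comp_def] using (Real.continuous_exp.tendsto 0).comp h0
    exact this.mono_left nhdsWithin_le_nhds
  have := h2.mul h3
  rw [zero_mul] at this
  apply this.congr' ?_
  filter_upwards [self_mem_nhdsWithin] with x (hx : 0 < x)
  rw [hfun, mul_assoc, ← Real.exp_add]
  rw [show (x⁻¹) ^ (-α) = x ^ α by
    rw [Real.inv_rpow hx.le, Real.rpow_neg hx.le, inv_inv]]
  congr 1
  field_simp
  ring

lemma hfun_nonneg (z α : ℝ) {x : ℝ} (hx : 0 ≤ x) : 0 ≤ hfun z α x :=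
  mul_nonneg (Real.rpow_nonneg hx α) (Real.exp_pos _).le

lemma continuousOn_hfun (z α : ℝ) : ContinuousOn (hfun z α) (Ioi 0) := by
  intro x hx
  have hx : (0:ℝ) < x := hx
  apply ContinuousAt.continuousWithinAt
  apply ContinuousAt.mul
  · exact Real.continuousAt_rpow_const x α (Or.inl hx.ne')
  · apply Real.continuous_exp.continuousAt.comp
    apply ContinuousAt.sub
    · exact (continuousAt_const.div (by fun_prop) (by positivity))
    · fun_prop

lemma hfun_bound_zero (z α : ℝ) (hz : 0 < z) :
    ∃ M, ∀ x ∈ Ioc (0:ℝ) 1, |hfun z α x| ≤ M := by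
  set g : ℝ → ℝ := fun y => y ^ (-α) * Real.exp (-(z ^ 2 / 2) * y) with hg
  have hgc : ContinuousOn g (Ici 1) := by
    intro y hy
    have hy : (1:ℝ) ≤ y := hy
    apply ContinuousAt.continuousWithinAt
    exact (Real.continuousAt_rpow_const y (-α) (Or.inl (by linarith))).mul (by fun_prop)
  obtain ⟨M, hM⟩ := bounded_of_tendsto 1 hgc
    (tendsto_rpow_mul_exp_neg_mul_atTop_nhds_zero (-α) (z ^ 2 / 2) (by positivity))
  refine ⟨M, fun x ⟨hx0, hx1⟩ => ?_⟩
  have key : hfun z α x ≤ g x⁻¹ := by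
    have h1 : g x⁻¹ = x ^ α * Real.exp (-z ^ 2 / (2 * x)) := by
      rw [hg]
      simp only []
      rw [show (x⁻¹) ^ (-α) = x ^ α by
        rw [Real.inv_rpow hx0.le, Real.rpow_neg hx0.le, inv_inv]]
      congr 2
      field_simp
    rw [h1, hfun]
    apply mul_le_mul_of_nonneg_left _ (Real.rpow_nonneg hx0.le α)
    exact Real.exp_le_exp.mpr (by linarith)
  have hge : |hfun z α x| = hfun z α x := abs_of_nonneg (hfun_nonneg z α hx0.le)
  rw [hge]
  exact key.trans ((le_abs_self _).trans (hM x⁻¹ (one_le_inv_iff₀.mpr ⟨hx0, hx1⟩)))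

lemma hfun_bound_atTop (z α : ℝ) (hz : 0 < z) :
    ∃ M, ∀ x ∈ Ici (1:ℝ), |hfun z α x| ≤ M * Real.exp (-(1/4) * x) := by
  set g : ℝ → ℝ := fun y => y ^ α * Real.exp (-(1/4) * y) with hg
  have hgc : ContinuousOn g (Ici 1) := by
    intro y hy
    have hy : (1:ℝ) ≤ y := hy
    apply ContinuousAt.continuousWithinAt
    exact (Real.continuousAt_rpow_const y α (Or.inl (by linarith))).mul (by fun_prop)
  obtain ⟨M, hM⟩ := bounded_of_tendsto 1 hgc
    (tendsto_rpow_mul_exp_neg_mul_atTop_nhds_zero α (1/4) (by norm_num))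
  refine ⟨M, fun x hx => ?_⟩
  have hx1 : (1:ℝ) ≤ x := hx
  have hx0 : (0:ℝ) < x := by linarith
  rw [abs_of_nonneg (hfun_nonneg z α hx0.le)]
  have key : hfun z α x ≤ g x * Real.exp (-(1/4) * x) := by
    rw [hfun, hg]
    simp only []
    rw [mul_assoc, ← Real.exp_add]
    apply mul_le_mul_of_nonneg_left _ (Real.rpow_nonneg hx0.le α)
    apply Real.exp_le_exp.mpr
    have : -z ^ 2 / (2 * x) ≤ 0 := by
      apply div_nonpos_of_nonpos_of_nonneg <;> nlinarith
    linarith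
  refine key.trans ?_
  apply mul_le_mul_of_nonneg_right _ (Real.exp_pos _).le
  exact (le_abs_self _).trans (hM x hx)

lemma integrableOn_hfun (z α : ℝ) (hz : 0 < z) :
    IntegrableOn (hfun z α) (Ioi (0:ℝ)) := by
  have meas : Measurable (hfun z α) := by
    unfold hfun
    fun_prop
  rw [show Ioi (0:ℝ) = Ioc 0 1 ∪ Ioi 1 from (Ioc_union_Ioi_eq_Ioi zero_le_one).symm]
  apply IntegrableOn.union
  · obtain ⟨M, hM⟩ := hfun_bound_zero z α hz
    apply Measure.integrableOn_of_bounded (M := M)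
    · rw [Real.volume_Ioc]; exact ENNReal.ofReal_ne_top
    · exact meas.aestronglyMeasurable
    · exact (ae_restrict_iff' measurableSet_Ioc).mpr (ae_of_all _ (fun x hx => by
        simpa using hM x hx))
  · obtain ⟨M, hM⟩ := hfun_bound_atTop z α hz
    have hint : IntegrableOn (fun x => M * Real.exp (-(1/4) * x)) (Ioi 1) :=
      (exp_neg_integrableOn_Ioi 1 (by norm_num : (0:ℝ) < 1/4)).const_mul M
    apply hint.integrable.mono meas.aestronglyMeasurable.restrict
    apply (ae_restrict_iff' measurableSet_Ioi).mpr (ae_of_all _ (fun x hx => ?_))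
    have h := hM x (Set.mem_Ici.mpr (le_of_lt (Set.mem_Ioi.mp hx)))
    rw [Real.norm_eq_abs, Real.norm_eq_abs]
    refine h.trans ?_
    exact le_abs_self _

noncomputable def Ifun (z α : ℝ) : ℝ := ∫ x in Ioi (0:ℝ), hfun z α x

lemma hasDerivAt_hfun (z α : ℝ) {x : ℝ} (hx : 0 < x) :
    HasDerivAt (hfun z α)
      (α * hfun z (α-1) x + z^2/2 * hfun z (α-2) x - 1/2 * hfun z α x) x := by
  have h1 : HasDerivAt (fun y : ℝ => y ^ α) (α * x ^ (α-1)) x :=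
    Real.hasDerivAt_rpow_const (Or.inl hx.ne')
  have h2 : HasDerivAt (fun y : ℝ => -z^2/(2*y) - y/2) (z^2/(2*x^2) - 1/2) x := by
    have ha : HasDerivAt (fun y : ℝ => y⁻¹) (-((x:ℝ)^2)⁻¹) x := hasDerivAt_inv hx.ne'
    have hb := ha.const_mul (-z^2/2)
    have hc := (hasDerivAt_id x).div_const 2
    have hd := hb.sub hc
    have heq : (fun y : ℝ => -z^2/2 * y⁻¹ - id y / 2) = (fun y : ℝ => -z^2/(2*y) - y/2) := by
      funext y
      simp [div_eq_mul_inv, mul_inv]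
      ring
    rw [show ((fun y : ℝ => -z^2/2 * y⁻¹) - fun x => id x / 2) = fun y : ℝ => -z^2/(2*y) - y/2 from heq] at hd
    refine hd.congr_deriv ?_
    field_simp
  have h3 := h2.exp
  have h4 := h1.mul h3
  have heq : (fun y : ℝ => y ^ α * Real.exp (-z^2/(2*y) - y/2)) = hfun z α := rfl
  rw [show ((fun y : ℝ => y ^ α) * fun x => Real.exp (-z^2/(2*x) - x/2)) = hfun z α from heq] at h4
  refine h4.congr_deriv ?_
  unfold hfun
  have e1 : x ^ (α - 1) = x ^ α / x := by
    rw [Real.rpow_sub hx, Real.rpow_one]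
  have e2 : x ^ (α - 2) = x ^ α / x ^ 2 := by
    rw [Real.rpow_sub hx, show ((2:ℝ) = ((2:ℕ):ℝ)) by norm_num, Real.rpow_natCast]
  rw [e1, e2]
  field_simp
  ring

lemma Ifun_rec (z α : ℝ) (hz : 0 < z) (hα : α ≠ 0) :
    Ifun z α = 2 * α * Ifun z (α - 1) + z ^ 2 * Ifun z (α - 2) := by
  have i1 := integrableOn_hfun z (α-1) hz
  have i2 := integrableOn_hfun z (α-2) hz
  have i3 := integrableOn_hfun z α hz
  have hf0 : hfun z α 0 = 0 := by
    simp [hfun, Real.zero_rpow hα]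
  have hcont : ContinuousWithinAt (hfun z α) (Ici 0) 0 := by
    unfold ContinuousWithinAt
    rw [hf0, show Ici (0:ℝ) = insert 0 (Ioi 0) from Set.Ioi_insert.symm,
      nhdsWithin_insert]
    rw [tendsto_sup]
    constructor
    · simpa [hf0] using tendsto_pure_nhds (hfun z α) 0
    · exact tendsto_hfun_zero z α hz
  have key := integral_Ioi_of_hasDerivAt_of_tendsto (a := 0) hcont
    (fun x hx => hasDerivAt_hfun z α (hx : (0:ℝ) < x))
    (((i1.const_mul α).add (i2.const_mul (z^2/2))).sub (i3.const_mul (1/2)))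
    (tendsto_hfun_atTop z α)
  rw [hf0, sub_zero] at key
  have ia : IntegrableOn (fun x => α * hfun z (α-1) x + z^2/2 * hfun z (α-2) x)
      (Ioi (0:ℝ)) := (i1.const_mul α).add (i2.const_mul (z^2/2))
  have ic : IntegrableOn (fun x => 1/2 * hfun z α x) (Ioi (0:ℝ)) := i3.const_mul (1/2)
  have expand : ∫ x in Ioi (0:ℝ),
      (α * hfun z (α-1) x + z^2/2 * hfun z (α-2) x - 1/2 * hfun z α x)
      = α * Ifun z (α-1) + z^2/2 * Ifun z (α-2) - 1/2 * Ifun z α := by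
    rw [integral_sub ia ic,
      integral_add (i1.const_mul α) (i2.const_mul (z^2/2)),
      integral_const_mul, integral_const_mul, integral_const_mul]
    rfl
  rw [expand] at key
  have : Ifun z α = 2 * (α * Ifun z (α-1) + z^2/2 * Ifun z (α-2)) := by linarith
  linarith [this]

lemma sq_image : (fun t : ℝ => t ^ 2) '' Ioi 0 = Ioi 0 := by
  ext y
  constructor
  · rintro ⟨t, ht, rfl⟩; exact pow_pos (show (0:ℝ) < t from ht) 2
  · intro hy
    exact ⟨Real.sqrt y, Real.sqrt_pos.mpr hy, Real.sq_sqrt (le_of_lt hy)⟩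

lemma sq_deriv : ∀ t ∈ Ioi (0:ℝ), HasDerivWithinAt (fun t : ℝ => t ^ 2) (2 * t) (Ioi 0) t := by
  intro t _
  simpa using (hasDerivAt_pow 2 t).hasDerivWithinAt

lemma sq_inj : InjOn (fun t : ℝ => t ^ 2) (Ioi 0) := by
  intro a ha b hb hab
  simp only at hab
  nlinarith [mem_Ioi.mp ha, mem_Ioi.mp hb]

lemma Ifun_eq_sq (z α : ℝ) :
    Ifun z α = ∫ t in Ioi (0:ℝ), |2 * t| * hfun z α (t ^ 2) := by
  rw [Ifun]
  conv_lhs => rw [← sq_image,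
    integral_image_eq_integral_abs_deriv_smul measurableSet_Ioi sq_deriv sq_inj]
  simp [smul_eq_mul]

lemma int_sq (z α : ℝ) (hz : 0 < z) :
    IntegrableOn (fun t => |2 * t| * hfun z α (t ^ 2)) (Ioi (0:ℝ)) := by
  have := (integrableOn_image_iff_integrableOn_abs_deriv_smul measurableSet_Ioi
    sq_deriv sq_inj (hfun z α)).mp (by rw [sq_image]; exact integrableOn_hfun z α hz)
  simpa [smul_eq_mul] using this

noncomputable def efun (z t : ℝ) : ℝ := Real.exp (-(t ^ 2 + z ^ 2 / t ^ 2) / 2)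

lemma hfun_sq_exp (z α t : ℝ) (ht : 0 < t) :
    hfun z α (t ^ 2) = (t ^ 2) ^ α * efun z t := by
  rw [hfun, efun]
  congr 1
  congr 1
  field_simp
  ring

lemma sq_rpow_32 (t : ℝ) (ht : 0 < t) : (t ^ 2 : ℝ) ^ (-(3:ℝ)/2) = (t ^ 3)⁻¹ := by
  rw [← Real.rpow_natCast t 2, ← Real.rpow_mul ht.le]
  norm_num

lemma sq_rpow_12 (t : ℝ) (ht : 0 < t) : (t ^ 2 : ℝ) ^ (-(1:ℝ)/2) = t⁻¹ := by
  rw [← Real.rpow_natCast t 2, ← Real.rpow_mul ht.le]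
  norm_num
  rw [Real.rpow_neg ht.le, Real.rpow_one]

lemma Ifun_32_eq (z : ℝ) (hz : 0 < z) :
    Ifun z (-(3:ℝ)/2) = ∫ t in Ioi (0:ℝ), 2 * ((t ^ 2)⁻¹ * efun z t) := by
  rw [Ifun_eq_sq]
  apply setIntegral_congr_fun measurableSet_Ioi
  intro t ht
  have ht : 0 < t := ht
  beta_reduce
  rw [hfun_sq_exp z _ t ht, sq_rpow_32 t ht, abs_of_pos (by positivity : (0:ℝ) < 2 * t)]
  field_simp

lemma Ifun_12_eq (z : ℝ) (hz : 0 < z) :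
    Ifun z (-(1:ℝ)/2) = ∫ t in Ioi (0:ℝ), 2 * efun z t := by
  rw [Ifun_eq_sq]
  apply setIntegral_congr_fun measurableSet_Ioi
  intro t ht
  have ht : 0 < t := ht
  beta_reduce
  rw [hfun_sq_exp z _ t ht, sq_rpow_12 t ht, abs_of_pos (by positivity : (0:ℝ) < 2 * t)]
  field_simp

lemma int_efun (z : ℝ) (hz : 0 < z) :
    IntegrableOn (fun t => efun z t) (Ioi (0:ℝ)) := by
  have h := (int_sq z (-(1:ℝ)/2) hz).congr_fun (g := fun t => 2 * efun z t) ?_ measurableSet_Ioi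
  · have h2 : IntegrableOn (fun t => 1/2 * (2 * efun z t)) (Ioi (0:ℝ)) := h.const_mul (1/2)
    apply h2.congr_fun ?_ measurableSet_Ioi
    intro t _
    beta_reduce
    ring
  · intro t ht
    have ht : 0 < t := ht
    beta_reduce
    rw [hfun_sq_exp z _ t ht, sq_rpow_12 t ht, abs_of_pos (by positivity : (0:ℝ) < 2 * t)]
    field_simp

lemma int_inv_efun (z : ℝ) (hz : 0 < z) :
    IntegrableOn (fun t => (t ^ 2)⁻¹ * efun z t) (Ioi (0:ℝ)) := by
  have h := (int_sq z (-(3:ℝ)/2) hz).congr_fun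
    (g := fun t => 2 * ((t ^ 2)⁻¹ * efun z t)) ?_ measurableSet_Ioi
  · have h2 : IntegrableOn (fun t => 1/2 * (2 * ((t ^ 2)⁻¹ * efun z t))) (Ioi (0:ℝ)) :=
      h.const_mul (1/2)
    apply h2.congr_fun ?_ measurableSet_Ioi
    intro t _
    beta_reduce
    ring
  · intro t ht
    have ht : 0 < t := ht
    beta_reduce
    rw [hfun_sq_exp z _ t ht, sq_rpow_32 t ht, abs_of_pos (by positivity : (0:ℝ) < 2 * t)]
    field_simp

lemma invmap_image (z : ℝ) (hz : 0 < z) : (fun t : ℝ => z ^ 2 / t) '' Ioi 0 = Ioi 0 := by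
  ext y
  constructor
  · rintro ⟨t, ht, rfl⟩
    exact div_pos (by positivity) (show (0:ℝ) < t from ht)
  · intro hy
    have hy : (0:ℝ) < y := hy
    refine ⟨z ^ 2 / y, div_pos (by positivity) hy, ?_⟩
    field_simp

lemma invmap_deriv (z : ℝ) (hz : 0 < z) : ∀ t ∈ Ioi (0:ℝ),
    HasDerivWithinAt (fun t : ℝ => z ^ 2 / t) (-(z ^ 2) / t ^ 2) (Ioi 0) t := by
  intro t ht
  have ht : 0 < t := ht
  have h : HasDerivAt (fun y : ℝ => z ^ 2 * y⁻¹) (z ^ 2 * (-(t ^ 2)⁻¹)) t :=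
    (hasDerivAt_inv ht.ne').const_mul (z ^ 2)
  have heq : (fun y : ℝ => z ^ 2 * y⁻¹) = fun y : ℝ => z ^ 2 / y := by
    funext y; rw [div_eq_mul_inv]
  rw [heq] at h
  refine h.hasDerivWithinAt.congr_deriv ?_
  ring

lemma invmap_inj (z : ℝ) (hz : 0 < z) : InjOn (fun t : ℝ => z ^ 2 / t) (Ioi 0) := by
  intro a ha b hb hab
  have ha : (0:ℝ) < a := ha
  have hb : (0:ℝ) < b := hb
  beta_reduce at hab
  field_simp at hab
  nlinarith [sq_nonneg z, hab]

lemma zsq_rpow_12 (z t : ℝ) (hz : 0 < z) (ht : 0 < t) :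
    ((z ^ 2 / t : ℝ)) ^ (-(1:ℝ)/2) = z⁻¹ * t ^ ((1:ℝ)/2) := by
  rw [Real.div_rpow (by positivity) ht.le]
  rw [show ((z^2:ℝ)) ^ (-(1:ℝ)/2) = z⁻¹ by
    rw [← Real.rpow_natCast z 2, ← Real.rpow_mul hz.le]
    norm_num
    rw [Real.rpow_neg hz.le, Real.rpow_one]]
  rw [show ((-1:ℝ)/2) = -((1:ℝ)/2) by norm_num, Real.rpow_neg ht.le]
  field_simp

lemma I_half (z : ℝ) (hz : 0 < z) : Ifun z (-(1:ℝ)/2) = z * Ifun z (-(3:ℝ)/2) := by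
  have key : Ifun z (-(1:ℝ)/2)
      = ∫ t in Ioi (0:ℝ), z * hfun z (-(3:ℝ)/2) t := by
    rw [Ifun]
    conv_lhs => rw [← invmap_image z hz,
      integral_image_eq_integral_abs_deriv_smul measurableSet_Ioi (invmap_deriv z hz)
        (invmap_inj z hz)]
    apply setIntegral_congr_fun measurableSet_Ioi
    intro t ht
    have ht : 0 < t := ht
    beta_reduce
    rw [smul_eq_mul, neg_div, abs_neg, abs_of_pos (by positivity : (0:ℝ) < z^2/t^2),
      hfun, hfun, zsq_rpow_12 z t hz ht]
    have harg : -z ^ 2 / (2 * (z ^ 2 / t)) - z ^ 2 / t / 2 = -z ^ 2 / (2 * t) - t / 2 := by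
      field_simp
      ring
    rw [harg]
    have hts : t ^ (-(3:ℝ)/2) = t ^ ((1:ℝ)/2) / t ^ 2 := by
      rw [show (-(3:ℝ)/2) = (1:ℝ)/2 - 2 by norm_num, Real.rpow_sub ht,
        show ((2:ℝ) = ((2:ℕ):ℝ)) by norm_num, Real.rpow_natCast]
    rw [hts]
    field_simp
  rw [key, integral_const_mul]
  rfl

lemma submap_image (z : ℝ) (hz : 0 < z) :
    (fun t : ℝ => t - z / t) '' Ioi 0 = univ := by
  apply eq_univ_of_forall
  intro u
  have hpos : (0:ℝ) ≤ u ^ 2 + 4 * z := by nlinarith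
  set s := Real.sqrt (u ^ 2 + 4 * z) with hsdef
  have hs2 : s ^ 2 = u ^ 2 + 4 * z := Real.sq_sqrt hpos
  have hs0 : 0 ≤ s := Real.sqrt_nonneg _
  have ht : 0 < (u + s) / 2 := by nlinarith
  refine ⟨(u + s) / 2, ht, ?_⟩
  beta_reduce
  have hus : 0 < u + s := by linarith
  rw [div_div_eq_mul_div]
  rw [div_sub_div _ _ (by norm_num : (2:ℝ) ≠ 0) hus.ne']
  rw [div_eq_iff (by positivity : (2:ℝ) * (u + s) ≠ 0)]
  nlinarith [hs2]

lemma submap_deriv (z : ℝ) : ∀ t ∈ Ioi (0:ℝ),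
    HasDerivWithinAt (fun t : ℝ => t - z / t) (1 + z / t ^ 2) (Ioi 0) t := by
  intro t ht
  have ht : 0 < t := ht
  have h : HasDerivAt (fun y : ℝ => y - z * y⁻¹) (1 - z * (-(t ^ 2)⁻¹)) t :=
    (hasDerivAt_id t).sub ((hasDerivAt_inv ht.ne').const_mul z)
  have heq : (fun y : ℝ => y - z * y⁻¹) = fun y : ℝ => y - z / y := by
    funext y; rw [div_eq_mul_inv]
  rw [heq] at h
  refine h.hasDerivWithinAt.congr_deriv ?_
  ring

lemma submap_inj (z : ℝ) (hz : 0 < z) : InjOn (fun t : ℝ => t - z / t) (Ioi 0) := by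
  apply StrictMonoOn.injOn
  intro a ha b hb hab
  have ha : (0:ℝ) < a := ha
  have hb : (0:ℝ) < b := hb
  have h2 : z / b < z / a := div_lt_div_of_pos_left hz ha hab
  beta_reduce
  linarith

lemma gaussian_eq (z : ℝ) (hz : 0 < z) :
    Real.sqrt (2 * Real.pi)
      = Real.exp z * ((∫ t in Ioi (0:ℝ), efun z t)
        + z * ∫ t in Ioi (0:ℝ), (t ^ 2)⁻¹ * efun z t) := by
  have g1 : (∫ u : ℝ, Real.exp (-(1/2) * u ^ 2)) = Real.sqrt (2 * Real.pi) := by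
    rw [integral_gaussian]
    congr 1
    rw [div_div_eq_mul_div]
    ring_nf
  have g2 : (∫ u : ℝ, Real.exp (-(1/2) * u ^ 2))
      = ∫ t in Ioi (0:ℝ), |1 + z / t ^ 2| * Real.exp (-(1/2) * (t - z / t) ^ 2) := by
    rw [← MeasureTheory.setIntegral_univ, ← submap_image z hz,
      integral_image_eq_integral_abs_deriv_smul measurableSet_Ioi (submap_deriv z)
        (submap_inj z hz)]
    simp [smul_eq_mul]
  have g3 : (∫ t in Ioi (0:ℝ), |1 + z / t ^ 2| * Real.exp (-(1/2) * (t - z / t) ^ 2))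
      = ∫ t in Ioi (0:ℝ), Real.exp z * (efun z t + z * ((t ^ 2)⁻¹ * efun z t)) := by
    apply setIntegral_congr_fun measurableSet_Ioi
    intro t ht
    have ht : 0 < t := ht
    have habs : |1 + z / t ^ 2| = 1 + z / t ^ 2 := abs_of_pos (by positivity)
    beta_reduce
    rw [habs, efun]
    have harg : -(1/2) * (t - z / t) ^ 2 = z + -(t ^ 2 + z ^ 2 / t ^ 2) / 2 := by
      field_simp
      ring
    rw [harg, Real.exp_add]
    field_simp
  have g4 : (∫ t in Ioi (0:ℝ), Real.exp z * (efun z t + z * ((t ^ 2)⁻¹ * efun z t)))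
      = Real.exp z * ((∫ t in Ioi (0:ℝ), efun z t)
        + z * ∫ t in Ioi (0:ℝ), (t ^ 2)⁻¹ * efun z t) := by
    rw [integral_const_mul]
    congr 1
    rw [integral_add (int_efun z hz) ((int_inv_efun z hz).const_mul z), integral_const_mul]
  rw [← g1, g2, g3, g4]

lemma Ifun_32 (z : ℝ) (hz : 0 < z) :
    Ifun z (-(3:ℝ)/2) = Real.sqrt (2 * Real.pi) * Real.exp (-z) / z := by
  have h12 := Ifun_12_eq z hz
  have h32 := Ifun_32_eq z hz
  rw [integral_const_mul] at h12 h32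
  have hg := gaussian_eq z hz
  have hh := I_half z hz
  rw [h12, h32] at hh
  have he : (∫ t in Ioi (0:ℝ), efun z t)
      = z * ∫ t in Ioi (0:ℝ), (t ^ 2)⁻¹ * efun z t := by linarith
  rw [he] at hg
  have hexp : Real.exp z ≠ 0 := (Real.exp_pos z).ne'
  rw [h32]
  have : Real.sqrt (2 * Real.pi) = Real.exp z * z
      * (2 * ∫ t in Ioi (0:ℝ), (t ^ 2)⁻¹ * efun z t) := by
    rw [hg]; ring
  rw [show Real.exp (-z) = (Real.exp z)⁻¹ from Real.exp_neg z, this]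
  field_simp

lemma Ifun_12 (z : ℝ) (hz : 0 < z) :
    Ifun z (-(1:ℝ)/2) = Real.sqrt (2 * Real.pi) * Real.exp (-z) := by
  rw [I_half z hz, Ifun_32 z hz]
  field_simp

noncomputable def bcoef (m l : ℕ) : ℝ :=
  (Nat.factorial (2 * m - l) : ℝ) / ((Nat.factorial (m - l) : ℝ) * (Nat.factorial l : ℝ))
    * 2 ^ l / 2 ^ m

lemma besselTheta_eq (m : ℕ) (z : ℝ) :
    besselTheta m z = ∑ l ∈ Finset.range (m + 1), bcoef m l * z ^ l := by
  rw [besselTheta, besselQ, Finset.mul_sum]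
  apply Finset.sum_congr rfl
  intro l hl
  have hl : l ≤ m := Nat.lt_succ_iff.mp (Finset.mem_range.mp hl)
  have hl2 : l ≤ 2 * m := by omega
  have e1 : (Nat.choose m l : ℝ) * (Nat.factorial l) * (Nat.factorial (m - l))
      = Nat.factorial m := by exact_mod_cast Nat.choose_mul_factorial_mul_factorial hl
  have e2 : (Nat.choose (2 * m) l : ℝ) * (Nat.factorial l) * (Nat.factorial (2 * m - l))
      = Nat.factorial (2 * m) := by exact_mod_cast Nat.choose_mul_factorial_mul_factorial hl2
  have f0 : ∀ k : ℕ, (Nat.factorial k : ℝ) ≠ 0 := fun k =>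
    Nat.cast_ne_zero.mpr (Nat.factorial_ne_zero k)
  have hC1 : (Nat.choose m l : ℝ)
      = (Nat.factorial m : ℝ) / ((Nat.factorial l : ℝ) * (Nat.factorial (m - l) : ℝ)) := by
    field_simp
    linarith [e1]
  have hC2 : (Nat.choose (2 * m) l : ℝ)
      = (Nat.factorial (2 * m) : ℝ)
        / ((Nat.factorial l : ℝ) * (Nat.factorial (2 * m - l) : ℝ)) := by
    field_simp
    linarith [e2]
  rw [bcoef, mul_pow, hC1, hC2]
  field_simp

lemma factorial_cast_ne (k : ℕ) : (Nat.factorial k : ℝ) ≠ 0 :=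
  Nat.cast_ne_zero.mpr (Nat.factorial_ne_zero k)

lemma bcoef_self (k : ℕ) : bcoef k k = 1 := by
  rw [bcoef, show 2 * k - k = k by omega, Nat.sub_self]
  simp [Nat.factorial]
  exact Nat.factorial_ne_zero k

lemma bcoef_zero (m : ℕ) : bcoef (m + 2) 0 = (2 * (m:ℝ) + 3) * bcoef (m + 1) 0 := by
  rw [bcoef, bcoef]
  simp only [Nat.sub_zero, Nat.factorial_zero]
  have e1 : ((Nat.factorial (2 * (m + 2)) : ℝ))
      = (2 * (m:ℝ) + 4) * (2 * (m:ℝ) + 3) * (Nat.factorial (2 * (m + 1))) := by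
    rw [show 2 * (m + 2) = (2 * (m + 1) + 1) + 1 by ring, Nat.factorial_succ,
      Nat.factorial_succ]
    push_cast; ring
  have e2 : ((Nat.factorial (m + 2) : ℝ)) = ((m:ℝ) + 2) * (Nat.factorial (m + 1)) := by
    rw [show m + 2 = (m + 1) + 1 by ring, Nat.factorial_succ]
    push_cast; ring
  rw [e1, e2]
  have h1 := factorial_cast_ne (2 * (m + 1))
  have h2 := factorial_cast_ne (m + 1)
  field_simp
  ring

lemma bcoef_one (m : ℕ) : bcoef (m + 2) 1 = (2 * (m:ℝ) + 3) * bcoef (m + 1) 1 := by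
  rw [bcoef, bcoef]
  rw [show 2 * (m + 2) - 1 = (2 * m + 2) + 1 by omega,
    show 2 * (m + 1) - 1 = 2 * m + 1 by omega,
    show m + 2 - 1 = m + 1 by omega, show m + 1 - 1 = m by omega]
  have e1 : ((Nat.factorial (2 * m + 2 + 1) : ℝ))
      = (2 * (m:ℝ) + 3) * (2 * (m:ℝ) + 2) * (Nat.factorial (2 * m + 1)) := by
    rw [Nat.factorial_succ, show 2 * m + 2 = (2 * m + 1) + 1 by ring, Nat.factorial_succ]
    push_cast; ring
  have e2 : ((Nat.factorial (m + 1) : ℝ)) = ((m:ℝ) + 1) * (Nat.factorial m) := by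
    rw [Nat.factorial_succ]; push_cast; ring
  rw [e1, e2]
  have h1 := factorial_cast_ne (2 * m + 1)
  have h2 := factorial_cast_ne m
  field_simp
  ring

lemma bcoef_main (k b : ℕ) :
    bcoef (k + b + 3) (k + 2)
      = (2 * ((k:ℝ) + b + 1) + 3) * bcoef (k + b + 2) (k + 2) + bcoef (k + b + 1) k := by
  rw [bcoef, bcoef, bcoef]
  rw [show 2 * (k + b + 3) - (k + 2) = (k + 2 * b + 4) by omega,
    show (k + b + 3) - (k + 2) = b + 1 by omega,
    show 2 * (k + b + 2) - (k + 2) = (k + 2 * b + 2) by omega,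
    show (k + b + 2) - (k + 2) = b by omega,
    show 2 * (k + b + 1) - k = (k + 2 * b + 2) by omega,
    show (k + b + 1) - k = b + 1 by omega]
  have e1 : ((Nat.factorial (k + 2 * b + 4) : ℝ))
      = ((k:ℝ) + 2 * b + 4) * ((k:ℝ) + 2 * b + 3) * (Nat.factorial (k + 2 * b + 2)) := by
    rw [show k + 2 * b + 4 = ((k + 2 * b + 3) + 1) by ring, Nat.factorial_succ,
      show k + 2 * b + 3 = ((k + 2 * b + 2) + 1) by ring, Nat.factorial_succ]
    push_cast; ring
  have e2 : ((Nat.factorial (b + 1) : ℝ)) = ((b:ℝ) + 1) * (Nat.factorial b) := by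
    rw [Nat.factorial_succ]; push_cast; ring
  have e3 : ((Nat.factorial (k + 2) : ℝ))
      = ((k:ℝ) + 2) * ((k:ℝ) + 1) * (Nat.factorial k) := by
    rw [show k + 2 = (k + 1) + 1 by ring, Nat.factorial_succ, Nat.factorial_succ]
    push_cast; ring
  rw [e1, e2, e3]
  have h1 := factorial_cast_ne (k + 2 * b + 2)
  have h2 := factorial_cast_ne b
  have h3 := factorial_cast_ne k
  field_simp
  ring

lemma bcoef_step (m l : ℕ) (hl : l < m + 3) :
    bcoef (m + 2) l
      = (2 * (m:ℝ) + 3) * (if l ≤ m + 1 then bcoef (m + 1) l else 0)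
        + (if 2 ≤ l then bcoef m (l - 2) else 0) := by
  by_cases h1 : l ≤ m + 1
  · rw [if_pos h1]
    by_cases h2 : 2 ≤ l
    · rw [if_pos h2]
      obtain ⟨k, rfl⟩ : ∃ k, l = k + 2 := ⟨l - 2, by omega⟩
      obtain ⟨b, rfl⟩ : ∃ b, m = k + 1 + b := ⟨m - (k + 1), by omega⟩
      have := bcoef_main k b
      rw [show k + 1 + b + 2 = k + b + 3 by ring, show k + 1 + b + 1 = k + b + 2 by ring,
        show k + 2 - 2 = k by omega]
      rw [this]
      push_cast
      ring_nf
    · rw [if_neg h2]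
      interval_cases l
      · rw [bcoef_zero]; ring
      · rw [bcoef_one]; ring
  · rw [if_neg h1, if_pos (by omega : 2 ≤ l)]
    have hl2 : l = m + 2 := by omega
    subst hl2
    rw [show m + 2 - 2 = m by omega, bcoef_self, bcoef_self]
    ring

lemma besselTheta_rec (m : ℕ) (z : ℝ) :
    besselTheta (m + 2) z
      = (2 * (m:ℝ) + 3) * besselTheta (m + 1) z + z ^ 2 * besselTheta m z := by
  rw [besselTheta_eq, besselTheta_eq, besselTheta_eq]
  have lhs : ∑ l ∈ Finset.range (m + 3), bcoef (m + 2) l * z ^ l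
      = ∑ l ∈ Finset.range (m + 3),
          ((2 * (m:ℝ) + 3) * ((if l ≤ m + 1 then bcoef (m + 1) l else 0) * z ^ l)
            + (if 2 ≤ l then bcoef m (l - 2) else 0) * z ^ l) := by
    apply Finset.sum_congr rfl
    intro l hl
    rw [bcoef_step m l (Finset.mem_range.mp hl)]
    ring
  rw [show m + 2 + 1 = m + 3 by ring, lhs, Finset.sum_add_distrib]
  congr 1
  · rw [← Finset.mul_sum]
    congr 1
    rw [show m + 3 = (m + 2) + 1 by ring, Finset.sum_range_succ,
      if_neg (by omega : ¬ (m + 2 ≤ m + 1)), zero_mul, add_zero]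
    apply Finset.sum_congr rfl
    intro l hl
    rw [if_pos (Nat.lt_succ_iff.mp (Finset.mem_range.mp hl))]
  · rw [Finset.mul_sum, show m + 3 = (m + 2) + 1 by ring, Finset.sum_range_succ',
      show m + 2 = (m + 1) + 1 by ring, Finset.sum_range_succ']
    simp only [if_neg (by omega : ¬ (2 ≤ 1)), if_neg (by omega : ¬ (2 ≤ 0)), zero_mul,
      add_zero]
    apply Finset.sum_congr rfl
    intro l hl
    rw [if_pos (by omega : 2 ≤ l + 1 + 1), show l + 1 + 1 - 2 = l by omega]
    ring

lemma besselF_zero (z : ℝ) : besselF 0 z = 1 := by simp [besselF]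

lemma besselF_one (z : ℝ) : besselF 1 z = z := by
  simp [besselF, besselTheta, besselQ]

lemma besselF_rec (n : ℕ) (z : ℝ) :
    besselF (n + 2) z = (2 * (n:ℝ) + 1) * besselF (n + 1) z + z ^ 2 * besselF n z := by
  cases n with
  | zero =>
    simp [besselF, besselTheta, besselQ, Finset.sum_range_succ, Nat.factorial]
    ring
  | succ k =>
    have h3 : besselF (k + 3) z = z * besselTheta (k + 2) z := by
      rw [besselF, if_neg (by omega), show k + 3 - 1 = k + 2 by omega]
    have h2 : besselF (k + 2) z = z * besselTheta (k + 1) z := by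
      rw [besselF, if_neg (by omega), show k + 2 - 1 = k + 1 by omega]
    have h1 : besselF (k + 1) z = z * besselTheta k z := by
      rw [besselF, if_neg (by omega), show k + 1 - 1 = k by omega]
    rw [show k + 1 + 2 = k + 3 by ring, h3, show k + 1 + 1 = k + 2 by ring, h2, h1,
      besselTheta_rec k z]
    push_cast
    ring

lemma moment_eq (z : ℝ) (hz : 0 < z) (n : ℕ) :
    (∫ x in Ioi (0:ℝ), x ^ n * gigMinus z x)
      = z * Real.exp z / Real.sqrt (2 * Real.pi) * Ifun z ((n:ℝ) - 3/2) := by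
  rw [Ifun, ← integral_const_mul]
  apply setIntegral_congr_fun measurableSet_Ioi
  intro x hx
  have hx : 0 < x := hx
  beta_reduce
  rw [gigMinus, hfun,
    show ((n:ℝ) - 3/2) = (n:ℝ) + (-(3:ℝ)/2) by ring, Real.rpow_add hx, Real.rpow_natCast]
  ring

theorem stmt_10 (z : ℝ) (hz : 0 < z) (n : ℕ) :
    ∫ x in Set.Ioi (0 : ℝ), x ^ n * gigMinus z x = besselF n z := by
  have hπ : Real.sqrt (2 * Real.pi) ≠ 0 :=
    (Real.sqrt_pos.mpr (by positivity)).ne'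
  have hexp : Real.exp z ≠ 0 := (Real.exp_pos z).ne'
  set C := z * Real.exp z / Real.sqrt (2 * Real.pi) with hC
  have main : ∀ m : ℕ, C * Ifun z ((m:ℝ) - 3/2) = besselF m z
      ∧ C * Ifun z (((m+1:ℕ):ℝ) - 3/2) = besselF (m+1) z := by
    intro m
    induction m with
    | zero =>
      constructor
      · rw [show (((0:ℕ)):ℝ) - 3/2 = -(3:ℝ)/2 by norm_num, Ifun_32 z hz, besselF_zero,
          hC, Real.exp_neg]
        field_simp
      · rw [show (((0+1:ℕ)):ℝ) - 3/2 = -(1:ℝ)/2 by norm_num, Ifun_12 z hz, besselF_one,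
          hC, Real.exp_neg]
        field_simp
    | succ k ih =>
      refine ⟨ih.2, ?_⟩
      have hc2 : (((k+1+1:ℕ)):ℝ) - 3/2 = (k:ℝ) + 1/2 := by push_cast; ring
      have hc1 : (((k+1:ℕ)):ℝ) - 3/2 = (k:ℝ) + 1/2 - 1 := by push_cast; ring
      have hc0 : ((k:ℕ):ℝ) - 3/2 = (k:ℝ) + 1/2 - 2 := by push_cast; ring
      have e1 : C * Ifun z ((k:ℝ) + 1/2 - 1) = besselF (k+1) z := by
        rw [← hc1]; exact ih.2
      have e0 : C * Ifun z ((k:ℝ) + 1/2 - 2) = besselF k z := by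
        rw [← hc0]; exact ih.1
      rw [hc2, Ifun_rec z ((k:ℝ) + 1/2) hz (by positivity), besselF_rec k z,
        ← e1, ← e0]
      ring
  rw [moment_eq z hz n, ← hC]
  exact (main n).1
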